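/- For every natural number n, Σ_{i=0}^{n} (−1)^i · C(n,i) · bernoulli'_i · bernoulli'_{n−i} = (1 − n) · bernoulli'_n, where C(n,i) is the binomial coefficient. Equivalently, the formal power series φ(X) = X/(1 − e^{−X}) = Σ_{p≥0} bernoulli'_p X^p/p! in ℚ⟦X⟧ satisfies φ(−X)·φ(X) = φ(X) − X·φ′(X), where φ′ is the formal derivative of φ. -/

import Mathlib

open PowerSeries Finset

private lemma deriv_exp_aux : (d⁄dX ℚ) (PowerSeries.exp ℚ) = PowerSeries.exp ℚ := by
  ext n
  rw [PowerSeries.coeff_derivative, PowerSeries.coeff_exp, PowerSeries.coeff_exp]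
  simp only [Algebra.algebraMap_self, RingHom.id_apply]
  rw [Nat.factorial_succ]
  push_cast
  have h1 : ((n : ℚ) + 1) ≠ 0 := by positivity
  have h2 : ((n.factorial : ℚ)) ≠ 0 := by exact_mod_cast n.factorial_ne_zero
  field_simp

private lemma exp_sub_one_ne_zero : PowerSeries.exp ℚ - 1 ≠ 0 := by
  intro h
  have := congrArg (PowerSeries.coeff (R := ℚ) 1) h
  simp [PowerSeries.coeff_exp, PowerSeries.coeff_one] at this

private lemma key_identity :
    bernoulliPowerSeries ℚ * bernoulli'PowerSeries ℚ =
      bernoulli'PowerSeries ℚ - X * (d⁄dX ℚ) (bernoulli'PowerSeries ℚ) := by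
  set e := PowerSeries.exp ℚ with he
  set b := bernoulli'PowerSeries ℚ with hb
  set B := bernoulliPowerSeries ℚ with hB
  have h0 : B * (e - 1) = X := bernoulliPowerSeries_mul_exp_sub_one ℚ
  have h1 : b * (e - 1) = X * e := bernoulli'PowerSeries_mul_exp_sub_one ℚ
  have h2 : (d⁄dX ℚ) b * (e - 1) + b * e = e + X * e := by
    have hd := congrArg (d⁄dX ℚ) h1
    rw [Derivation.leibniz, Derivation.leibniz, map_sub, Derivation.map_one_eq_zero, deriv_exp_aux,
      PowerSeries.derivative_X] at hd
    simp only [smul_eq_mul, sub_zero, mul_one] at hd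
    linear_combination hd
  have hne : (e - 1) ^ 2 ≠ 0 := pow_ne_zero 2 exp_sub_one_ne_zero
  apply mul_right_cancel₀ hne
  linear_combination (b * (e - 1)) * h0 - (e - 1) * (1 + X) * h1 + X * (e - 1) * h2

/-- For every natural number `n`,
`Σ_{i=0}^{n} (−1)^i C(n,i) bernoulli'_i bernoulli'_{n−i} = (1 − n) bernoulli'_n`. -/
theorem stmt_7 (n : ℕ) :
    ∑ i ∈ Finset.range (n + 1),
        (-1 : ℚ) ^ i * (n.choose i : ℚ) * bernoulli' i * bernoulli' (n - i) =
      (1 - (n : ℚ)) * bernoulli' n := by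
  have h := congrArg (PowerSeries.coeff (R := ℚ) n) key_identity
  rw [PowerSeries.coeff_mul, Finset.Nat.sum_antidiagonal_eq_sum_range_succ_mk, map_sub] at h
  have hXd : (PowerSeries.coeff (R := ℚ) n) (X * (d⁄dX ℚ) (bernoulli'PowerSeries ℚ))
      = (n : ℚ) * (bernoulli' n / n.factorial) := by
    cases n with
    | zero => simp
    | succ m =>
      rw [PowerSeries.coeff_succ_X_mul, PowerSeries.coeff_derivative]
      rw [bernoulli'PowerSeries, PowerSeries.coeff_mk]
      simp only [Algebra.algebraMap_self, RingHom.id_apply]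
      push_cast
      ring
  rw [hXd] at h
  simp only [bernoulliPowerSeries, bernoulli'PowerSeries, PowerSeries.coeff_mk,
    Algebra.algebraMap_self, RingHom.id_apply] at h
  have h2 := congrArg (fun x : ℚ => (n.factorial : ℚ) * x) h
  simp only [Finset.mul_sum] at h2
  have hfac : ((n.factorial : ℚ)) ≠ 0 := by exact_mod_cast n.factorial_ne_zero
  calc ∑ i ∈ Finset.range (n + 1),
        (-1 : ℚ) ^ i * (n.choose i : ℚ) * bernoulli' i * bernoulli' (n - i)
      = ∑ i ∈ Finset.range (n + 1),
        (n.factorial : ℚ) * (bernoulli i / i.factorial * (bernoulli' (n - i) / (n - i).factorial)) := by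
        refine Finset.sum_congr rfl fun i hi => ?_
        have hi' : i ≤ n := Nat.lt_succ_iff.mp (Finset.mem_range.mp hi)
        have hc : (n.choose i : ℚ) * (i.factorial : ℚ) * ((n - i).factorial : ℚ)
            = (n.factorial : ℚ) := by
          exact_mod_cast congrArg (Nat.cast : ℕ → ℚ)
            (Nat.choose_mul_factorial_mul_factorial hi')
        have hif : ((i.factorial : ℚ)) ≠ 0 := by exact_mod_cast i.factorial_ne_zero
        have hnif : (((n - i).factorial : ℚ)) ≠ 0 := by exact_mod_cast (n - i).factorial_ne_zero
        rw [bernoulli]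
        field_simp
        linear_combination (bernoulli' i * bernoulli' (n - i)) * hc
    _ = (n.factorial : ℚ) * (bernoulli' n / n.factorial - (n : ℚ) * (bernoulli' n / n.factorial)) := by
        rw [← Finset.mul_sum, h]
    _ = (1 - (n : ℚ)) * bernoulli' n := by field_simp
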